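/- Let $n \ge 2$, $d \ge 2$, $i \ge 1$ be integers with $m = \lfloor n/2 \rfloor$. Suppose for each $l = 1, \dots, i$ the value $y_l$ satisfies $\sum_{j=1}^{l} d^{-m-l}\binom{m+l}{m+j} y_j = d^{-(n-m-l)} - d^{-(m+l)}$. Then $y_i = \sum_{j=1}^{i} (-1)^{i+j} d^{m+j} \binom{m+i}{m+j} \left( d^{-(n-m-j)} - d^{-(m+j)} \right)$. -/

import Mathlib

private lemma sign_split (i j k : ℕ) : (-1 : ℝ) ^ (j + k) = (-1 : ℝ) ^ (i + j) * (-1 : ℝ) ^ (i + k) := by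
  rw [← pow_add, neg_one_pow_eq_pow_mod_two, neg_one_pow_eq_pow_mod_two (n := i + j + (i + k)),
    show (i + j + (i + k)) % 2 = (j + k) % 2 from by omega]

private lemma orth_aux (m i k : ℕ) (hk : k ≤ i) :
    ∑ j ∈ Finset.Icc k i,
      (-1 : ℝ) ^ (i + j) * ((m + i).choose (m + j)) * ((m + j).choose (m + k))
    = if k = i then 1 else 0 := by
  have key : ∀ j ∈ Finset.Icc k i,
      (-1 : ℝ) ^ (i + j) * ((m + i).choose (m + j)) * ((m + j).choose (m + k))
      = (-1 : ℝ) ^ (i + k) * ((m + i).choose (m + k)) *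
          ((-1 : ℝ) ^ (j - k) * ((i - k).choose (j - k))) := by
    intro j hj
    simp only [Finset.mem_Icc] at hj
    obtain ⟨hkj, hji⟩ := hj
    have hcm := Nat.choose_mul (n := m + i) (k := m + j) (s := m + k)
      (by omega)
    have h1 : m + i - (m + k) = i - k := by omega
    have h2 : m + j - (m + k) = j - k := by omega
    rw [h1, h2] at hcm
    have hsign : (-1 : ℝ) ^ (i + j) = (-1 : ℝ) ^ (i + k) * (-1 : ℝ) ^ (j - k) := by
      rw [← pow_add]
      congr 1
      have h3 : i + k + (j - k) = i + j := by omega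
      rw [h3]
    have hcmR : ((m + i).choose (m + j) : ℝ) * ((m + j).choose (m + k) : ℝ)
        = ((m + i).choose (m + k) : ℝ) * ((i - k).choose (j - k) : ℝ) := by
      exact_mod_cast congrArg (Nat.cast : ℕ → ℝ) hcm
    calc (-1 : ℝ) ^ (i + j) * ((m + i).choose (m + j)) * ((m + j).choose (m + k))
        = (-1 : ℝ) ^ (i + j) * (((m + i).choose (m + j) : ℝ) * ((m + j).choose (m + k))) := by
          ring
      _ = (-1 : ℝ) ^ (i + j) * (((m + i).choose (m + k) : ℝ) * ((i - k).choose (j - k))) := by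
          rw [hcmR]
      _ = _ := by rw [hsign]; ring
  rw [Finset.sum_congr rfl key, ← Finset.mul_sum]
  have hre : ∑ j ∈ Finset.Icc k i, (-1 : ℝ) ^ (j - k) * ((i - k).choose (j - k))
      = ∑ t ∈ Finset.range (i - k + 1), (-1 : ℝ) ^ t * ((i - k).choose t) := by
    refine Finset.sum_bij (fun j _ => j - k) ?_ ?_ ?_ ?_
    · intro j hj; simp only [Finset.mem_Icc] at hj; simp only [Finset.mem_range]; omega
    · intro a ha b hb h; simp only [Finset.mem_Icc] at ha hb; omega
    · intro t ht; simp only [Finset.mem_range] at ht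
      exact ⟨k + t, by simp only [Finset.mem_Icc]; omega, by omega⟩
    · intro a ha; rfl
  rw [hre]
  have hint : ∑ t ∈ Finset.range (i - k + 1), (-1 : ℝ) ^ t * ((i - k).choose t)
      = if i - k = 0 then 1 else 0 := by
    have := Int.alternating_sum_range_choose (n := i - k)
    exact_mod_cast congrArg (Int.cast : ℤ → ℝ) this
  rw [hint]
  by_cases h : k = i
  · subst h; simp
  · have h2 : i - k ≠ 0 := by omega
    simp [h, h2]

private lemma inv_aux (m : ℕ) (c y : ℕ → ℝ) :
    ∀ i, 1 ≤ i →
    (∀ l, 1 ≤ l → l ≤ i →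
      ∑ j ∈ Finset.Icc 1 l, (((m + l).choose (m + j) : ℝ)) * y j = c l) →
    y i = ∑ j ∈ Finset.Icc 1 i,
      (-1 : ℝ) ^ (i + j) * ((m + i).choose (m + j)) * c j := by
  intro i
  induction i using Nat.strong_induction_on with
  | _ i ih =>
    intro hi hsys
    obtain ⟨p, rfl⟩ : ∃ p, i = p + 1 := ⟨i - 1, by omega⟩
    have heq := hsys (p + 1) hi le_rfl
    rw [Finset.sum_Icc_succ_top (by omega : 1 ≤ p + 1)] at heq
    have htop : ((m + (p + 1)).choose (m + (p + 1)) : ℝ) = 1 := by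
      simp
    rw [htop, one_mul] at heq
    -- rewrite each y j for j ≤ p using the inductive hypothesis
    have hsub : ∀ j ∈ Finset.Icc 1 p,
        ((m + (p + 1)).choose (m + j) : ℝ) * y j
        = ((m + (p + 1)).choose (m + j) : ℝ) *
            ∑ k ∈ Finset.Icc 1 j, (-1 : ℝ) ^ (j + k) * ((m + j).choose (m + k)) * c k := by
      intro j hj
      simp only [Finset.mem_Icc] at hj
      rw [ih j (by omega) hj.1 (fun l hl1 hl2 => hsys l hl1 (by omega))]
    rw [Finset.sum_congr rfl hsub] at heq
    -- swap the double sum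
    have hswap : ∑ j ∈ Finset.Icc 1 p, ((m + (p + 1)).choose (m + j) : ℝ) *
          ∑ k ∈ Finset.Icc 1 j, (-1 : ℝ) ^ (j + k) * ((m + j).choose (m + k)) * c k
        = ∑ k ∈ Finset.Icc 1 p, ∑ j ∈ Finset.Icc k p,
            ((m + (p + 1)).choose (m + j) : ℝ) *
              ((-1 : ℝ) ^ (j + k) * ((m + j).choose (m + k)) * c k) := by
      simp_rw [Finset.mul_sum]
      exact Finset.sum_comm' (by intro x y; simp only [Finset.mem_Icc]; omega)
    rw [hswap] at heq
    -- evaluate the inner sums via orthogonality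
    have hinner : ∀ k ∈ Finset.Icc 1 p,
        ∑ j ∈ Finset.Icc k p, ((m + (p + 1)).choose (m + j) : ℝ) *
            ((-1 : ℝ) ^ (j + k) * ((m + j).choose (m + k)) * c k)
        = -((-1 : ℝ) ^ (p + 1 + k) * ((m + (p + 1)).choose (m + k)) * c k) := by
      intro k hk
      simp only [Finset.mem_Icc] at hk
      have horth := orth_aux m (p + 1) k (by omega)
      rw [Finset.sum_Icc_succ_top (by omega : k ≤ p + 1)] at horth
      have hne : ¬ k = p + 1 := by omega
      rw [if_neg hne] at horth
      have htop2 : (-1 : ℝ) ^ (p + 1 + (p + 1)) * ((m + (p + 1)).choose (m + (p + 1))) *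
          ((m + (p + 1)).choose (m + k))
          = ((m + (p + 1)).choose (m + k) : ℝ) := by
        have : (-1 : ℝ) ^ (p + 1 + (p + 1)) = 1 := by
          rw [show p + 1 + (p + 1) = 2 * (p + 1) by omega, pow_mul, neg_one_sq, one_pow]
        rw [this, htop]; ring
      have hpart : ∑ j ∈ Finset.Icc k p,
          (-1 : ℝ) ^ (p + 1 + j) * ((m + (p + 1)).choose (m + j)) * ((m + j).choose (m + k))
          = -((m + (p + 1)).choose (m + k) : ℝ) := by linarith [horth, htop2.symm ▸ horth]
      calc ∑ j ∈ Finset.Icc k p, ((m + (p + 1)).choose (m + j) : ℝ) *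
              ((-1 : ℝ) ^ (j + k) * ((m + j).choose (m + k)) * c k)
          = ((-1 : ℝ) ^ (p + 1 + k) * c k) *
              ∑ j ∈ Finset.Icc k p, (-1 : ℝ) ^ (p + 1 + j) *
                ((m + (p + 1)).choose (m + j)) * ((m + j).choose (m + k)) := by
            rw [Finset.mul_sum]
            refine Finset.sum_congr rfl ?_
            intro j hj
            rw [sign_split (p + 1) j k]
            ring
        _ = ((-1 : ℝ) ^ (p + 1 + k) * c k) * (-((m + (p + 1)).choose (m + k) : ℝ)) := by
            rw [hpart]
        _ = _ := by ring
    rw [Finset.sum_congr rfl hinner] at heq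
    rw [Finset.sum_neg_distrib] at heq
    -- conclude
    rw [Finset.sum_Icc_succ_top (by omega : 1 ≤ p + 1)]
    have htop3 : (-1 : ℝ) ^ (p + 1 + (p + 1)) * ((m + (p + 1)).choose (m + (p + 1))) * c (p + 1)
        = c (p + 1) := by
      have : (-1 : ℝ) ^ (p + 1 + (p + 1)) = 1 := by
        rw [show p + 1 + (p + 1) = 2 * (p + 1) by omega, pow_mul, neg_one_sq, one_pow]
      rw [this, htop]; ring
    rw [htop3]
    linarith [heq]

theorem eigenvalue_closed_form (n d i : ℕ) (hn : 2 ≤ n) (hd : 2 ≤ d) (hi : 1 ≤ i)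
    (m : ℕ) (hm : m = n / 2) (y : ℕ → ℝ)
    (hsys : ∀ l, 1 ≤ l → l ≤ i →
      ∑ j ∈ Finset.Icc 1 l,
        (d : ℝ) ^ (-((m : ℤ) + l)) * ((m + l).choose (m + j)) * y j
      = (d : ℝ) ^ (-((n : ℤ) - m - l)) - (d : ℝ) ^ (-((m : ℤ) + l))) :
    y i = ∑ j ∈ Finset.Icc 1 i,
      (-1 : ℝ) ^ (i + j) * (d : ℝ) ^ ((m : ℤ) + j) * ((m + i).choose (m + j))
        * ((d : ℝ) ^ (-((n : ℤ) - m - j)) - (d : ℝ) ^ (-((m : ℤ) + j))) := by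
  have hdne : (d : ℝ) ≠ 0 := by positivity
  set c : ℕ → ℝ := fun l =>
    (d : ℝ) ^ ((m : ℤ) + l) * ((d : ℝ) ^ (-((n : ℤ) - m - l)) - (d : ℝ) ^ (-((m : ℤ) + l)))
    with hc
  have hsys' : ∀ l, 1 ≤ l → l ≤ i →
      ∑ j ∈ Finset.Icc 1 l, (((m + l).choose (m + j) : ℝ)) * y j = c l := by
    intro l hl1 hl2
    have h := hsys l hl1 hl2
    have h1 : (d : ℝ) ^ ((m : ℤ) + l) * (d : ℝ) ^ (-((m : ℤ) + l)) = 1 := by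
      rw [← zpow_add₀ hdne, show ((m : ℤ) + l) + (-((m : ℤ) + l)) = 0 from by ring, zpow_zero]
    calc ∑ j ∈ Finset.Icc 1 l, (((m + l).choose (m + j) : ℝ)) * y j
        = ∑ j ∈ Finset.Icc 1 l, (d : ℝ) ^ ((m : ℤ) + l) *
            ((d : ℝ) ^ (-((m : ℤ) + l)) * ((m + l).choose (m + j)) * y j) := by
          refine Finset.sum_congr rfl ?_
          intro j hj
          calc (((m + l).choose (m + j) : ℝ)) * y j
              = ((d : ℝ) ^ ((m : ℤ) + l) * (d : ℝ) ^ (-((m : ℤ) + l))) *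
                  (((m + l).choose (m + j) : ℝ) * y j) := by rw [h1, one_mul]
            _ = _ := by ring
      _ = (d : ℝ) ^ ((m : ℤ) + l) *
            ∑ j ∈ Finset.Icc 1 l, (d : ℝ) ^ (-((m : ℤ) + l)) * ((m + l).choose (m + j)) * y j := by
          rw [Finset.mul_sum]
      _ = c l := by rw [h, hc]
  have := inv_aux m c y i hi hsys'
  rw [this]
  refine Finset.sum_congr rfl ?_
  intro j hj
  rw [hc]
  ring
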